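/- arXiv:2206.06793 — 2 statements merged into one kernel-verified Lean document; each statement's English description precedes it below -/
import Mathlib

section
/- Pruning preserves truth of sentential formulas: Let M = (Δ, Π, σ, γ) be a model of a sentential FOSL formula φ, and let P ⊆ Π be any nonempty subset such that for each subformula □_e ψ of φ with M ⊭ □_e ψ, P contains some π with π ∈ σ_E(e) and M, π ⊭ ψ. Let M' be the restriction of M to P. Then for all subformulas ψ of φ, all π ∈ P, and all variable assignments v: M, π, v ⊨ ψ if and only if M', π, v ⊨ ψ. In particular M' ⊨ φ. -/
namespace FOSL

/-- Standpoint expressions: e ::= * | s | e∪e | e∩e | e∖e -/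
inductive SE (S : Type) : Type
  | star : SE S
  | sym : S → SE S
  | union : SE S → SE S → SE S
  | inter : SE S → SE S → SE S
  | diff : SE S → SE S → SE S

/-- FOSL formulas over predicates `P` (with arities `ar`), constants `C`,
standpoint symbols `S`; variables are natural numbers. -/
inductive Fm (P : Type) (ar : P → ℕ) (C : Type) (S : Type) : Type
  | atom : (p : P) → (Fin (ar p) → C ⊕ ℕ) → Fm P ar C S
  | eq : (C ⊕ ℕ) → (C ⊕ ℕ) → Fm P ar C S
  | neg : Fm P ar C S → Fm P ar C S
  | conj : Fm P ar C S → Fm P ar C S → Fm P ar C S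
  | all : ℕ → Fm P ar C S → Fm P ar C S
  | box : SE S → Fm P ar C S → Fm P ar C S

variable {P : Type} {ar : P → ℕ} {C S : Type}

def Fm.disj (φ ψ : Fm P ar C S) : Fm P ar C S := .neg (.conj (.neg φ) (.neg ψ))
def Fm.impl (φ ψ : Fm P ar C S) : Fm P ar C S := .neg (.conj φ (.neg ψ))
def Fm.ex (x : ℕ) (φ : Fm P ar C S) : Fm P ar C S := .neg (.all x (.neg φ))
def Fm.dia (e : SE S) (φ : Fm P ar C S) : Fm P ar C S := .neg (.box e (.neg φ))

/-- First-order standpoint structures (constant domain, rigid constants). -/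
structure Model (P : Type) (ar : P → ℕ) (C : Type) (S : Type) : Type 1 where
  Dom : Type
  dom_ne : Nonempty Dom
  Prec : Type
  prec_ne : Nonempty Prec
  σ : S → Set Prec
  interpP : Prec → (p : P) → (Fin (ar p) → Dom) → Prop
  interpC : C → Dom

/-- Homomorphic extension of σ to standpoint expressions, with σ(*) = Π. -/
def Model.σE (M : Model P ar C S) : SE S → Set M.Prec
  | .star => Set.univ
  | .sym s => M.σ s
  | .union e1 e2 => M.σE e1 ∪ M.σE e2
  | .inter e1 e2 => M.σE e1 ∩ M.σE e2
  | .diff e1 e2 => M.σE e1 \ M.σE e2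

def Model.termVal (M : Model P ar C S) (v : ℕ → M.Dom) : C ⊕ ℕ → M.Dom
  | .inl c => M.interpC c
  | .inr x => v x

/-- Satisfaction `M, π, v ⊨ φ`. -/
def Model.sat (M : Model P ar C S) : M.Prec → (ℕ → M.Dom) → Fm P ar C S → Prop
  | π, v, .atom p ts => M.interpP π p fun i => M.termVal v (ts i)
  | _, v, .eq t1 t2 => M.termVal v t1 = M.termVal v t2
  | π, v, .neg φ => ¬ M.sat π v φ
  | π, v, .conj φ ψ => M.sat π v φ ∧ M.sat π v ψ
  | π, v, .all x φ => ∀ δ : M.Dom, M.sat π (Function.update v x δ) φ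
  | _, v, .box e φ => ∀ π' ∈ M.σE e, M.sat π' v φ

/-- `M ⊨ φ`: satisfaction at all precisifications and assignments. -/
def Model.satM (M : Model P ar C S) (φ : Fm P ar C S) : Prop :=
  ∀ (π : M.Prec) (v : ℕ → M.Dom), M.sat π v φ

def tmVars : C ⊕ ℕ → Finset ℕ
  | .inl _ => ∅
  | .inr x => {x}

/-- Free variables. -/
def Fm.fv : Fm P ar C S → Finset ℕ
  | .atom _ ts => Finset.univ.biUnion fun i => tmVars (ts i)
  | .eq t1 t2 => tmVars t1 ∪ tmVars t2
  | .neg φ => φ.fv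
  | .conj φ ψ => φ.fv ∪ ψ.fv
  | .all x φ => φ.fv.erase x
  | .box _ φ => φ.fv

/-- Sentential: in every subformula □_e ψ, ψ has no free variables. -/
def Fm.sentential : Fm P ar C S → Prop
  | .atom _ _ => True
  | .eq _ _ => True
  | .neg φ => φ.sentential
  | .conj φ ψ => φ.sentential ∧ ψ.sentential
  | .all _ φ => φ.sentential
  | .box _ φ => φ.fv = ∅ ∧ φ.sentential

/-- Set of subformulas. -/
def Fm.Sub : Fm P ar C S → Set (Fm P ar C S)
  | .atom p ts => {.atom p ts}
  | .eq t1 t2 => {.eq t1 t2}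
  | .neg φ => insert (.neg φ) φ.Sub
  | .conj φ ψ => insert (.conj φ ψ) (φ.Sub ∪ ψ.Sub)
  | .all x φ => insert (.all x φ) φ.Sub
  | .box e φ => insert (.box e φ) φ.Sub

/-- |φ| = number of subformulas of φ. -/
noncomputable def Fm.size (φ : Fm P ar C S) : ℕ := φ.Sub.ncard

def satisfiable (φ : Fm P ar C S) : Prop := ∃ M : Model P ar C S, M.satM φ

/-- n-satisfiable: has a model with exactly n precisifications. -/
def nsatisfiable (n : ℕ) (φ : Fm P ar C S) : Prop :=
  ∃ M : Model P ar C S, M.satM φ ∧ Nat.card M.Prec = n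

def Fm.boxfree : Fm P ar C S → Prop
  | .atom _ _ => True
  | .eq _ _ => True
  | .neg φ => φ.boxfree
  | .conj φ ψ => φ.boxfree ∧ ψ.boxfree
  | .all _ φ => φ.boxfree
  | .box _ _ => False

/-- Standpoint standard normal form: no nested modalities. -/
def Fm.ssnf : Fm P ar C S → Prop
  | .atom _ _ => True
  | .eq _ _ => True
  | .neg φ => φ.ssnf
  | .conj φ ψ => φ.ssnf ∧ ψ.ssnf
  | .all _ φ => φ.ssnf
  | .box _ φ => φ.boxfree

/-- Restriction of a standpoint structure to a nonempty subset of precisifications. -/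
def Model.restrict (M : Model P ar C S) (Ps : Set M.Prec) (h : Ps.Nonempty) :
    Model P ar C S where
  Dom := M.Dom
  dom_ne := M.dom_ne
  Prec := Ps
  prec_ne := h.to_subtype
  σ := fun s => {π : Ps | (π : M.Prec) ∈ M.σ s}
  interpP := fun π => M.interpP π
  interpC := M.interpC

/-! ### Plain first-order logic -/

inductive FO (Q : Type) (arQ : Q → ℕ) (C : Type) : Type
  | tt
  | atom (q : Q) (ts : Fin (arQ q) → C ⊕ ℕ)
  | eq (t1 t2 : C ⊕ ℕ)
  | neg (φ : FO Q arQ C)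
  | conj (φ ψ : FO Q arQ C)
  | all (x : ℕ) (φ : FO Q arQ C)

variable {Q : Type} {arQ : Q → ℕ}

def FO.impl (φ ψ : FO Q arQ C) : FO Q arQ C := .neg (.conj φ (.neg ψ))

def FO.conjList : List (FO Q arQ C) → FO Q arQ C
  | [] => .tt
  | φ :: l => .conj φ (FO.conjList l)

structure FOModel (Q : Type) (arQ : Q → ℕ) (C : Type) : Type 1 where
  Dom : Type
  dom_ne : Nonempty Dom
  interp : (q : Q) → (Fin (arQ q) → Dom) → Prop
  interpC : C → Dom

def FOModel.termVal (I : FOModel Q arQ C) (v : ℕ → I.Dom) : C ⊕ ℕ → I.Dom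
  | .inl c => I.interpC c
  | .inr x => v x

def FOModel.sat (I : FOModel Q arQ C) : (ℕ → I.Dom) → FO Q arQ C → Prop
  | _, .tt => True
  | v, .atom q ts => I.interp q fun i => I.termVal v (ts i)
  | v, .eq t1 t2 => I.termVal v t1 = I.termVal v t2
  | v, .neg φ => ¬ I.sat v φ
  | v, .conj φ ψ => I.sat v φ ∧ I.sat v ψ
  | v, .all x φ => ∀ δ : I.Dom, I.sat (Function.update v x δ) φ

def FOModel.satM (I : FOModel Q arQ C) (φ : FO Q arQ C) : Prop := ∀ v, I.sat v φ

def fosatisfiable (φ : FO Q arQ C) : Prop := ∃ I : FOModel Q arQ C, I.satM φ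

/-! ### Translation to plain FO -/

/-- Translated vocabulary: a predicate P_π for each P and π, and nullary
predicates s_π (for `some s`) and *_π (for `none`). -/
abbrev TQ (P S Pre : Type) : Type := (P × Pre) ⊕ (Option S × Pre)

def tAr (ar : P → ℕ) {S Pre : Type} : TQ P S Pre → ℕ
  | .inl (p, _) => ar p
  | .inr _ => 0

variable {Pre : Type}

/-- trans_E(π, e). -/
def transE (π : Pre) : SE S → FO (TQ P S Pre) (tAr ar) C
  | .star => .atom (.inr (none, π)) Fin.elim0
  | .sym s => .atom (.inr (some s, π)) Fin.elim0
  | .union e1 e2 => .neg (.conj (.neg (transE π e1)) (.neg (transE π e2)))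
  | .inter e1 e2 => .conj (transE π e1) (transE π e2)
  | .diff e1 e2 => .conj (transE π e1) (.neg (transE π e2))

/-- trans_n(π, φ). -/
noncomputable def transF [Fintype Pre] (π : Pre) : Fm P ar C S → FO (TQ P S Pre) (tAr ar) C
  | .atom p ts => .atom (.inl (p, π)) ts
  | .eq t1 t2 => .eq t1 t2
  | .neg φ => .neg (transF π φ)
  | .conj φ ψ => .conj (transF π φ) (transF π ψ)
  | .all x φ => .all x (transF π φ)
  | .box e φ =>
      FO.conjList ((Finset.univ.toList).map fun π' : Pre =>
        FO.impl (transE π' e) (transF π' φ))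

/-- Trans_n(φ) = ⋀_π trans_n(π, φ) ∧ ⋀_π *_π. -/
noncomputable def TransN [Fintype Pre] (φ : Fm P ar C S) : FO (TQ P S Pre) (tAr ar) C :=
  .conj (FO.conjList ((Finset.univ.toList).map fun π : Pre => transF π φ))
        (FO.conjList ((Finset.univ.toList).map fun π : Pre =>
          FO.atom (.inr (none, π)) Fin.elim0))

/-- The plain first-order structure I_M associated with a standpoint structure M. -/
def Model.toFO (M : Model P ar C S) : FOModel (TQ P S M.Prec) (tAr ar) C where
  Dom := M.Dom
  dom_ne := M.dom_ne
  interp := fun q => match q with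
    | .inl (p, π) => fun args => M.interpP π p args
    | .inr (none, _) => fun _ => True
    | .inr (some s, π) => fun _ => π ∈ M.σ s
  interpC := M.interpC


lemma termVal_restrict (M : Model P ar C S) (Ps : Set M.Prec) (h : Ps.Nonempty)
    (v : ℕ → M.Dom) : (M.restrict Ps h).termVal v = M.termVal v := by
  funext t; cases t <;> rfl

lemma σE_restrict (M : Model P ar C S) (Ps : Set M.Prec) (h : Ps.Nonempty)
    (e : SE S) (π : Ps) : π ∈ (M.restrict Ps h).σE e ↔ (π : M.Prec) ∈ M.σE e := by
  induction e with
  | star => simp [Model.σE]; exact trivial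
  | sym s => simp [Model.σE, Model.restrict]; exact Iff.rfl
  | union e1 e2 ih1 ih2 => simp [Model.σE, Set.mem_union, ih1, ih2]; exact or_congr ih1 ih2
  | inter e1 e2 ih1 ih2 => simp [Model.σE, Set.mem_inter_iff, ih1, ih2]; exact and_congr ih1 ih2
  | diff e1 e2 ih1 ih2 => simp [Model.σE, Set.mem_diff, ih1, ih2]; exact and_congr ih1 (not_congr ih2)

lemma mem_Sub_self (φ : Fm P ar C S) : φ ∈ φ.Sub := by
  cases φ <;> simp [Fm.Sub]

lemma Sub_trans {φ ψ χ : Fm P ar C S} (h1 : ψ ∈ φ.Sub) (h2 : χ ∈ ψ.Sub) :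
    χ ∈ φ.Sub := by
  induction φ with
  | atom p ts => simp only [Fm.Sub, Set.mem_singleton_iff] at h1 ⊢; subst h1
                 simpa [Fm.Sub] using h2
  | eq t1 t2 => simp only [Fm.Sub, Set.mem_singleton_iff] at h1 ⊢; subst h1
                simpa [Fm.Sub] using h2
  | neg φ ih =>
      rcases Set.mem_insert_iff.mp h1 with h1 | h1
      · subst h1; exact h2
      · exact Set.mem_insert_of_mem _ (ih h1)
  | conj φ₁ φ₂ ih1 ih2 =>
      rcases Set.mem_insert_iff.mp h1 with h1 | h1
      · subst h1; exact h2
      · rcases h1 with h1 | h1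
        · exact Set.mem_insert_of_mem _ (Or.inl (ih1 h1))
        · exact Set.mem_insert_of_mem _ (Or.inr (ih2 h1))
  | all x φ ih =>
      rcases Set.mem_insert_iff.mp h1 with h1 | h1
      · subst h1; exact h2
      · exact Set.mem_insert_of_mem _ (ih h1)
  | box e φ ih =>
      rcases Set.mem_insert_iff.mp h1 with h1 | h1
      · subst h1; exact h2
      · exact Set.mem_insert_of_mem _ (ih h1)

/-- Pruning preserves truth of sentential formulas: restricting a model of a
sentential formula φ to a nonempty set P of precisifications containing a
witness for every subformula □_e ψ of φ falsified in M preserves the truth of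
all subformulas at precisifications in P; in particular M' ⊨ φ. -/
theorem pruning_preserves_truth (P : Type) (ar : P → ℕ) (C S : Type)
    (M : Model P ar C S) (φ : Fm P ar C S)
    (hφ : φ.sentential) (hM : M.satM φ)
    (Ps : Set M.Prec) (h : Ps.Nonempty)
    (hwit : ∀ (e : SE S) (ψ : Fm P ar C S), Fm.box e ψ ∈ φ.Sub →
      ¬ M.satM (Fm.box e ψ) →
      ∃ π ∈ Ps, π ∈ M.σE e ∧ ∀ v : ℕ → M.Dom, ¬ M.sat π v ψ) :
    (∀ ψ ∈ φ.Sub, ∀ (π : Ps) (v : ℕ → M.Dom),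
      (M.sat (π : M.Prec) v ψ ↔ (M.restrict Ps h).sat π v ψ)) ∧
    (M.restrict Ps h).satM φ := by
  have key : ∀ ψ ∈ φ.Sub, ∀ (π : Ps) (v : ℕ → M.Dom),
      (M.sat (π : M.Prec) v ψ ↔ (M.restrict Ps h).sat π v ψ) := by
    intro ψ
    induction ψ with
    | atom p ts =>
        intro _ π v
        simp only [Model.sat, termVal_restrict]
        exact Iff.rfl
    | eq t1 t2 =>
        intro _ π v
        simp only [Model.sat, termVal_restrict]
        exact Iff.rfl
    | neg ψ ih =>
        intro hmem π v
        have hψ : ψ ∈ φ.Sub :=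
          Sub_trans hmem (Set.mem_insert_of_mem _ (mem_Sub_self ψ))
        simp only [Model.sat, ih hψ π v]
    | conj ψ₁ ψ₂ ih1 ih2 =>
        intro hmem π v
        have hψ1 : ψ₁ ∈ φ.Sub :=
          Sub_trans hmem (Set.mem_insert_of_mem _ (Or.inl (mem_Sub_self ψ₁)))
        have hψ2 : ψ₂ ∈ φ.Sub :=
          Sub_trans hmem (Set.mem_insert_of_mem _ (Or.inr (mem_Sub_self ψ₂)))
        simp only [Model.sat, ih1 hψ1 π v, ih2 hψ2 π v]
    | all x ψ ih =>
        intro hmem π v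
        have hψ : ψ ∈ φ.Sub :=
          Sub_trans hmem (Set.mem_insert_of_mem _ (mem_Sub_self ψ))
        simp only [Model.sat]
        exact forall_congr' fun δ => ih hψ π (Function.update v x δ)
    | box e ψ ih =>
        intro hmem π v
        have hψ : ψ ∈ φ.Sub :=
          Sub_trans hmem (Set.mem_insert_of_mem _ (mem_Sub_self ψ))
        constructor
        · intro hs π' hπ'
          exact (ih hψ π' v).mp (hs π'.1 ((σE_restrict M Ps h e π').mp hπ'))
        · intro hs
          by_contra hns
          have hnM : ¬ M.satM (Fm.box e ψ) := fun hM' => hns (hM' π.1 v)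
          obtain ⟨π₁, hπ₁Ps, hπ₁e, hv⟩ := hwit e ψ hmem hnM
          have : (M.restrict Ps h).sat ⟨π₁, hπ₁Ps⟩ v ψ :=
            hs ⟨π₁, hπ₁Ps⟩ ((σE_restrict M Ps h e ⟨π₁, hπ₁Ps⟩).mpr hπ₁e)
          exact hv v ((ih hψ ⟨π₁, hπ₁Ps⟩ v).mpr this)
  refine ⟨key, fun π v => (key φ (mem_Sub_self φ) π v).mp (hM π.1 v)⟩

end FOSL
end

section
/- Padding of precisifications preserves satisfaction: if a FOSL formula φ has a model M = (Δ, Π, σ, γ) with |Π| = m ≤ n, then φ has a model with exactly n precisifications; hence m-satisfiability implies n-satisfiability for m ≤ n, for formulas in which every modal subformula □_e ψ is a sentence. -/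
namespace FOSL

variable {P : Type} {ar : P → ℕ} {C S : Type}

variable {Q : Type} {arQ : Q → ℕ}

variable {Pre : Type}

/-- Pullback of a standpoint structure along a map of precisifications. -/
def Model.pull (M : Model P ar C S) (Pre' : Type) (ne : Nonempty Pre')
    (f : Pre' → M.Prec) : Model P ar C S where
  Dom := M.Dom
  dom_ne := M.dom_ne
  Prec := Pre'
  prec_ne := ne
  σ := fun s => f ⁻¹' (M.σ s)
  interpP := fun π => M.interpP (f π)
  interpC := M.interpC

lemma pull_σE (M : Model P ar C S) (Pre' : Type) (ne : Nonempty Pre')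
    (f : Pre' → M.Prec) (e : SE S) :
    (M.pull Pre' ne f).σE e = f ⁻¹' (M.σE e) := by
  induction e with
  | star => rfl
  | sym s => rfl
  | union e1 e2 ih1 ih2 => simp [Model.σE, ih1, ih2, Set.preimage_union]; rfl
  | inter e1 e2 ih1 ih2 => simp [Model.σE, ih1, ih2, Set.preimage_inter]; rfl
  | diff e1 e2 ih1 ih2 => simp [Model.σE, ih1, ih2, Set.preimage_diff]; rfl

lemma pull_sat (M : Model P ar C S) (Pre' : Type) (ne : Nonempty Pre')
    (f : Pre' → M.Prec) (hf : Function.Surjective f) (φ : Fm P ar C S) :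
    ∀ (π : Pre') (v : ℕ → M.Dom),
      (M.pull Pre' ne f).sat π v φ ↔ M.sat (f π) v φ := by
  induction φ with
  | atom p ts => intro π v; rfl
  | eq t1 t2 => intro π v; rfl
  | neg φ ih => intro π v; simp [Model.sat, ih]
  | conj φ ψ ih1 ih2 => intro π v; simp [Model.sat, ih1, ih2]
  | all x φ ih => intro π v; simp only [Model.sat]; exact forall_congr' fun δ => ih _ _
  | box e φ ih =>
    intro π v
    simp only [Model.sat, pull_σE]
    constructor
    · intro h ρ hρ
      obtain ⟨ρ', rfl⟩ := hf ρ
      exact (ih ρ' v).mp (h ρ' hρ)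
    · intro h ρ' hρ'
      exact (ih ρ' v).mpr (h (f ρ') hρ')

/-- Padding of precisifications preserves satisfaction: for sentential
formulas, m-satisfiability implies n-satisfiability whenever 0 < m ≤ n. -/
theorem padding_precisifications (P : Type) (ar : P → ℕ) (C S : Type)
    (φ : Fm P ar C S) (hφ : φ.sentential)
    (m n : ℕ) (hm : 0 < m) (hmn : m ≤ n) :
    nsatisfiable m φ → nsatisfiable n φ := by
  rintro ⟨M, hsat, hcard⟩
  have hfin : Finite M.Prec := Nat.finite_of_card_ne_zero (by omega)
  obtain ⟨π₀⟩ := M.prec_ne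
  refine ⟨M.pull (M.Prec ⊕ Fin (n - m)) ⟨Sum.inl π₀⟩
      (Sum.elim id fun _ => π₀), ?_, ?_⟩
  · intro π v
    exact (pull_sat M _ _ _ (fun ρ => ⟨Sum.inl ρ, rfl⟩) φ π v).mpr (hsat _ v)
  · simp [Model.pull, Nat.card_sum, hcard, Nat.card_eq_fintype_card]
    omega

end FOSL
end
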